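/- For the three-web on the domain {(x¹,x²,y¹,y²) ∈ ℝ⁴ : x¹y² + x²y¹ ≠ 0} given by f¹ = (x¹ + y¹)(x² − y²), f² = (x¹ − y¹)(x² + y²), set Δ := x¹y² + x²y¹ and ρ := x¹x² + y¹y². Then the connection coefficients satisfy Γ¹₁₁ = −Γ²₁₁ = f²/(2Δ²), Γ¹₂₂ = −Γ²₂₂ = −f¹/(2Δ²), Γ¹₁₂ = −Γ¹₂₁ = −Γ²₁₂ = Γ²₂₁ = ρ/(2Δ²), and consequently the two components of the torsion covector are equal: a₁ = a₂ = −ρ/Δ². In particular the transversal a-distribution of this web is the one singled out by the condition a₁ = a₂. -/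

import Mathlib

noncomputable section

open Matrix

/-- Partial derivative of `g` with respect to the `j`-th coordinate at the point `x`. -/
def pd (j : Fin 2) (g : (Fin 2 → ℝ) → ℝ) (x : Fin 2 → ℝ) : ℝ :=
  deriv (fun t => g (Function.update x j t)) (x j)

variable (f : Fin 2 → (Fin 2 → ℝ) → (Fin 2 → ℝ) → ℝ)

/-- Jacobian matrix `f̄ = (∂fⁱ/∂xʲ)` with respect to the first group of variables. -/
def fbar (x y : Fin 2 → ℝ) : Matrix (Fin 2) (Fin 2) ℝ :=
  Matrix.of fun i j => pd j (fun x' => f i x' y) x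

/-- Jacobian matrix `f̃ = (∂fⁱ/∂yʲ)` with respect to the second group of variables. -/
def ftil (x y : Fin 2 → ℝ) : Matrix (Fin 2) (Fin 2) ℝ :=
  Matrix.of fun i j => pd j (fun y' => f i x y') y

/-- Mixed second partial derivative `∂²fⁱ/∂xˡ∂yᵐ`. -/
def d2 (i l m : Fin 2) (x y : Fin 2 → ℝ) : ℝ :=
  pd m (fun y' => pd l (fun x' => f i x' y') x) y

/-- Connection coefficients
`Γⁱⱼₖ = −∑_{l,m} (∂²fⁱ/∂xˡ∂yᵐ) ḡˡⱼ g̃ᵐₖ`, where `ḡ = f̄⁻¹`, `g̃ = f̃⁻¹`. -/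
def Gam (i j k : Fin 2) (x y : Fin 2 → ℝ) : ℝ :=
  - ∑ l : Fin 2, ∑ m : Fin 2,
      d2 f i l m x y * (fbar f x y)⁻¹ l j * (ftil f x y)⁻¹ m k

/-- Torsion covector `aⱼ = ∑ₖ (Γᵏⱼₖ − Γᵏₖⱼ)`. -/
def aCov (j : Fin 2) (x y : Fin 2 → ℝ) : ℝ :=
  ∑ k : Fin 2, (Gam f k j k x y - Gam f k k j x y)

/-- Covariant derivative `p_{ik} = ∑ₘ (∂aᵢ/∂xᵐ) ḡᵐₖ − ∑ⱼ aⱼ Γʲₖᵢ`. -/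
def pCov (i k : Fin 2) (x y : Fin 2 → ℝ) : ℝ :=
  (∑ m : Fin 2, pd m (fun x' => aCov f i x' y) x * (fbar f x y)⁻¹ m k)
    - ∑ j : Fin 2, aCov f j x y * Gam f j k i x y

/-- Covariant derivative `q_{ik} = ∑ₘ (∂aᵢ/∂yᵐ) g̃ᵐₖ − ∑ⱼ aⱼ Γʲᵢₖ`. -/
def qCov (i k : Fin 2) (x y : Fin 2 → ℝ) : ℝ :=
  (∑ m : Fin 2, pd m (fun y' => aCov f i x y') y * (ftil f x y)⁻¹ m k)
    - ∑ j : Fin 2, aCov f j x y * Gam f j i k x y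

/-- Isoclinicity invariant `p = (p₁₂ − p₂₁)/2`. -/
def pIso (x y : Fin 2 → ℝ) : ℝ := (pCov f 0 1 x y - pCov f 1 0 x y) / 2

/-- Isoclinicity invariant `q = (q₁₂ − q₂₁)/2`. -/
def qIso (x y : Fin 2 → ℝ) : ℝ := (qCov f 0 1 x y - qCov f 1 0 x y) / 2


/-- The web `f¹ = (x¹ + y¹)(x² − y²)`, `f² = (x¹ − y¹)(x² + y²)`.
(Indices: `x 0 ↦ x¹`, `x 1 ↦ x²`, `y 0 ↦ y¹`, `y 1 ↦ y²`.) -/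
noncomputable def webG : Fin 2 → (Fin 2 → ℝ) → (Fin 2 → ℝ) → ℝ :=
  ![fun x y => (x 0 + y 0) * (x 1 - y 1),
    fun x y => (x 0 - y 0) * (x 1 + y 1)]



lemma pd_linear (j : Fin 2) (x : Fin 2 → ℝ) (g : (Fin 2 → ℝ) → ℝ) (c d : ℝ)
    (hg : ∀ t, g (Function.update x j t) = c * t + d) : pd j g x = c := by
  unfold pd
  rw [funext hg]
  simpa using (((hasDerivAt_id (x j)).const_mul c).add_const d).deriv

lemma pdx00 (x y : Fin 2 → ℝ) : pd 0 (fun x' => webG 0 x' y) x = x 1 - y 1 :=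
  pd_linear _ _ _ _ (y 0 * (x 1 - y 1)) (fun t => by simp [webG, Function.update]; ring)
lemma pdx01 (x y : Fin 2 → ℝ) : pd 1 (fun x' => webG 0 x' y) x = x 0 + y 0 :=
  pd_linear _ _ _ _ (-((x 0 + y 0) * y 1)) (fun t => by simp [webG, Function.update]; ring)
lemma pdx10 (x y : Fin 2 → ℝ) : pd 0 (fun x' => webG 1 x' y) x = x 1 + y 1 :=
  pd_linear _ _ _ _ (-(y 0 * (x 1 + y 1))) (fun t => by simp [webG, Function.update]; ring)
lemma pdx11 (x y : Fin 2 → ℝ) : pd 1 (fun x' => webG 1 x' y) x = x 0 - y 0 :=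
  pd_linear _ _ _ _ ((x 0 - y 0) * y 1) (fun t => by simp [webG, Function.update]; ring)
lemma pdy00 (x y : Fin 2 → ℝ) : pd 0 (fun y' => webG 0 x y') y = x 1 - y 1 :=
  pd_linear _ _ _ _ (x 0 * (x 1 - y 1)) (fun t => by simp [webG, Function.update]; ring)
lemma pdy01 (x y : Fin 2 → ℝ) : pd 1 (fun y' => webG 0 x y') y = -(x 0 + y 0) :=
  pd_linear _ _ _ _ ((x 0 + y 0) * x 1) (fun t => by simp [webG, Function.update]; ring)
lemma pdy10 (x y : Fin 2 → ℝ) : pd 0 (fun y' => webG 1 x y') y = -(x 1 + y 1) :=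
  pd_linear _ _ _ _ (x 0 * (x 1 + y 1)) (fun t => by simp [webG, Function.update]; ring)
lemma pdy11 (x y : Fin 2 → ℝ) : pd 1 (fun y' => webG 1 x y') y = x 0 - y 0 :=
  pd_linear _ _ _ _ ((x 0 - y 0) * x 1) (fun t => by simp [webG, Function.update]; ring)

lemma fbar_eq (x y : Fin 2 → ℝ) :
    fbar webG x y = !![x 1 - y 1, x 0 + y 0; x 1 + y 1, x 0 - y 0] := by
  ext i j
  fin_cases i <;> fin_cases j <;> simp [fbar, pdx00, pdx01, pdx10, pdx11]

lemma ftil_eq (x y : Fin 2 → ℝ) :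
    ftil webG x y = !![x 1 - y 1, -(x 0 + y 0); -(x 1 + y 1), x 0 - y 0] := by
  ext i j
  fin_cases i <;> fin_cases j <;> simp [ftil, pdy00, pdy01, pdy10, pdy11]

lemma d2_000 (x y : Fin 2 → ℝ) : d2 webG 0 0 0 x y = 0 := by
  unfold d2
  rw [show (fun y' => pd 0 (fun x' => webG 0 x' y') x) = fun y' => x 1 - y' 1 from
    funext (fun y' => pdx00 x y')]
  exact pd_linear _ _ _ (0) (x 1 - y 1) (fun t => by simp [Function.update]; try ring)

lemma d2_001 (x y : Fin 2 → ℝ) : d2 webG 0 0 1 x y = -1 := by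
  unfold d2
  rw [show (fun y' => pd 0 (fun x' => webG 0 x' y') x) = fun y' => x 1 - y' 1 from
    funext (fun y' => pdx00 x y')]
  exact pd_linear _ _ _ (-1) (x 1) (fun t => by simp [Function.update]; try ring)

lemma d2_010 (x y : Fin 2 → ℝ) : d2 webG 0 1 0 x y = 1 := by
  unfold d2
  rw [show (fun y' => pd 1 (fun x' => webG 0 x' y') x) = fun y' => x 0 + y' 0 from
    funext (fun y' => pdx01 x y')]
  exact pd_linear _ _ _ (1) (x 0) (fun t => by simp [Function.update]; try ring)

lemma d2_011 (x y : Fin 2 → ℝ) : d2 webG 0 1 1 x y = 0 := by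
  unfold d2
  rw [show (fun y' => pd 1 (fun x' => webG 0 x' y') x) = fun y' => x 0 + y' 0 from
    funext (fun y' => pdx01 x y')]
  exact pd_linear _ _ _ (0) (x 0 + y 0) (fun t => by simp [Function.update]; try ring)

lemma d2_100 (x y : Fin 2 → ℝ) : d2 webG 1 0 0 x y = 0 := by
  unfold d2
  rw [show (fun y' => pd 0 (fun x' => webG 1 x' y') x) = fun y' => x 1 + y' 1 from
    funext (fun y' => pdx10 x y')]
  exact pd_linear _ _ _ (0) (x 1 + y 1) (fun t => by simp [Function.update]; try ring)

lemma d2_101 (x y : Fin 2 → ℝ) : d2 webG 1 0 1 x y = 1 := by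
  unfold d2
  rw [show (fun y' => pd 0 (fun x' => webG 1 x' y') x) = fun y' => x 1 + y' 1 from
    funext (fun y' => pdx10 x y')]
  exact pd_linear _ _ _ (1) (x 1) (fun t => by simp [Function.update]; try ring)

lemma d2_110 (x y : Fin 2 → ℝ) : d2 webG 1 1 0 x y = -1 := by
  unfold d2
  rw [show (fun y' => pd 1 (fun x' => webG 1 x' y') x) = fun y' => x 0 - y' 0 from
    funext (fun y' => pdx11 x y')]
  exact pd_linear _ _ _ (-1) (x 0) (fun t => by simp [Function.update]; try ring)

lemma d2_111 (x y : Fin 2 → ℝ) : d2 webG 1 1 1 x y = 0 := by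
  unfold d2
  rw [show (fun y' => pd 1 (fun x' => webG 1 x' y') x) = fun y' => x 0 - y' 0 from
    funext (fun y' => pdx11 x y')]
  exact pd_linear _ _ _ (0) (x 0 - y 0) (fun t => by simp [Function.update]; try ring)

lemma fbar_inv (x y : Fin 2 → ℝ) (hD : x 0 * y 1 + x 1 * y 0 ≠ 0) :
    (fbar webG x y)⁻¹ = (-(2 * (x 0 * y 1 + x 1 * y 0)))⁻¹ •
      !![x 0 - y 0, -(x 0 + y 0); -(x 1 + y 1), x 1 - y 1] := by
  apply Matrix.inv_eq_right_inv
  rw [fbar_eq]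
  have h1 : x 1 * y 0 + y 1 * x 0 ≠ 0 := by intro h; apply hD; linarith
  have h2 : y 1 * x 0 + x 1 * y 0 ≠ 0 := by intro h; apply hD; linarith
  ext i j
  fin_cases i <;> fin_cases j <;>
    simp [Matrix.mul_apply, Fin.sum_univ_two] <;> field_simp <;> ring

lemma ftil_inv (x y : Fin 2 → ℝ) (hD : x 0 * y 1 + x 1 * y 0 ≠ 0) :
    (ftil webG x y)⁻¹ = (-(2 * (x 0 * y 1 + x 1 * y 0)))⁻¹ •
      !![x 0 - y 0, x 0 + y 0; x 1 + y 1, x 1 - y 1] := by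
  apply Matrix.inv_eq_right_inv
  rw [ftil_eq]
  have h1 : x 1 * y 0 + y 1 * x 0 ≠ 0 := by intro h; apply hD; linarith
  have h2 : y 1 * x 0 + x 1 * y 0 ≠ 0 := by intro h; apply hD; linarith
  ext i j
  fin_cases i <;> fin_cases j <;>
    simp [Matrix.mul_apply, Fin.sum_univ_two] <;> field_simp <;> ring

lemma gam_000 (x y : Fin 2 → ℝ) (hD : x 0 * y 1 + x 1 * y 0 ≠ 0) :
    Gam webG 0 0 0 x y = (x 0 - y 0) * (x 1 + y 1) / (2 * (x 0 * y 1 + x 1 * y 0)^2) := by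
  unfold Gam
  rw [fbar_inv x y hD, ftil_inv x y hD]
  simp only [Fin.sum_univ_two, d2_000, d2_001, d2_010, d2_011, d2_100, d2_101, d2_110, d2_111,
    Matrix.smul_apply, Matrix.of_apply, Matrix.cons_val', Matrix.cons_val_zero, Matrix.cons_val_one,
    Matrix.head_cons, Matrix.head_fin_const, Matrix.empty_val', Matrix.cons_val_fin_one,
    smul_eq_mul]
  field_simp
  ring

lemma gam_100 (x y : Fin 2 → ℝ) (hD : x 0 * y 1 + x 1 * y 0 ≠ 0) :
    Gam webG 1 0 0 x y = -((x 0 - y 0) * (x 1 + y 1) / (2 * (x 0 * y 1 + x 1 * y 0)^2)) := by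
  unfold Gam
  rw [fbar_inv x y hD, ftil_inv x y hD]
  simp only [Fin.sum_univ_two, d2_000, d2_001, d2_010, d2_011, d2_100, d2_101, d2_110, d2_111,
    Matrix.smul_apply, Matrix.of_apply, Matrix.cons_val', Matrix.cons_val_zero, Matrix.cons_val_one,
    Matrix.head_cons, Matrix.head_fin_const, Matrix.empty_val', Matrix.cons_val_fin_one,
    smul_eq_mul]
  field_simp
  ring

lemma gam_011 (x y : Fin 2 → ℝ) (hD : x 0 * y 1 + x 1 * y 0 ≠ 0) :
    Gam webG 0 1 1 x y = -((x 0 + y 0) * (x 1 - y 1) / (2 * (x 0 * y 1 + x 1 * y 0)^2)) := by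
  unfold Gam
  rw [fbar_inv x y hD, ftil_inv x y hD]
  simp only [Fin.sum_univ_two, d2_000, d2_001, d2_010, d2_011, d2_100, d2_101, d2_110, d2_111,
    Matrix.smul_apply, Matrix.of_apply, Matrix.cons_val', Matrix.cons_val_zero, Matrix.cons_val_one,
    Matrix.head_cons, Matrix.head_fin_const, Matrix.empty_val', Matrix.cons_val_fin_one,
    smul_eq_mul]
  field_simp
  ring

lemma gam_111 (x y : Fin 2 → ℝ) (hD : x 0 * y 1 + x 1 * y 0 ≠ 0) :
    Gam webG 1 1 1 x y = (x 0 + y 0) * (x 1 - y 1) / (2 * (x 0 * y 1 + x 1 * y 0)^2) := by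
  unfold Gam
  rw [fbar_inv x y hD, ftil_inv x y hD]
  simp only [Fin.sum_univ_two, d2_000, d2_001, d2_010, d2_011, d2_100, d2_101, d2_110, d2_111,
    Matrix.smul_apply, Matrix.of_apply, Matrix.cons_val', Matrix.cons_val_zero, Matrix.cons_val_one,
    Matrix.head_cons, Matrix.head_fin_const, Matrix.empty_val', Matrix.cons_val_fin_one,
    smul_eq_mul]
  field_simp
  ring

lemma gam_001 (x y : Fin 2 → ℝ) (hD : x 0 * y 1 + x 1 * y 0 ≠ 0) :
    Gam webG 0 0 1 x y = (x 0 * x 1 + y 0 * y 1) / (2 * (x 0 * y 1 + x 1 * y 0)^2) := by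
  unfold Gam
  rw [fbar_inv x y hD, ftil_inv x y hD]
  simp only [Fin.sum_univ_two, d2_000, d2_001, d2_010, d2_011, d2_100, d2_101, d2_110, d2_111,
    Matrix.smul_apply, Matrix.of_apply, Matrix.cons_val', Matrix.cons_val_zero, Matrix.cons_val_one,
    Matrix.head_cons, Matrix.head_fin_const, Matrix.empty_val', Matrix.cons_val_fin_one,
    smul_eq_mul]
  field_simp
  ring

lemma gam_010 (x y : Fin 2 → ℝ) (hD : x 0 * y 1 + x 1 * y 0 ≠ 0) :
    Gam webG 0 1 0 x y = -((x 0 * x 1 + y 0 * y 1) / (2 * (x 0 * y 1 + x 1 * y 0)^2)) := by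
  unfold Gam
  rw [fbar_inv x y hD, ftil_inv x y hD]
  simp only [Fin.sum_univ_two, d2_000, d2_001, d2_010, d2_011, d2_100, d2_101, d2_110, d2_111,
    Matrix.smul_apply, Matrix.of_apply, Matrix.cons_val', Matrix.cons_val_zero, Matrix.cons_val_one,
    Matrix.head_cons, Matrix.head_fin_const, Matrix.empty_val', Matrix.cons_val_fin_one,
    smul_eq_mul]
  field_simp
  ring

lemma gam_101 (x y : Fin 2 → ℝ) (hD : x 0 * y 1 + x 1 * y 0 ≠ 0) :
    Gam webG 1 0 1 x y = -((x 0 * x 1 + y 0 * y 1) / (2 * (x 0 * y 1 + x 1 * y 0)^2)) := by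
  unfold Gam
  rw [fbar_inv x y hD, ftil_inv x y hD]
  simp only [Fin.sum_univ_two, d2_000, d2_001, d2_010, d2_011, d2_100, d2_101, d2_110, d2_111,
    Matrix.smul_apply, Matrix.of_apply, Matrix.cons_val', Matrix.cons_val_zero, Matrix.cons_val_one,
    Matrix.head_cons, Matrix.head_fin_const, Matrix.empty_val', Matrix.cons_val_fin_one,
    smul_eq_mul]
  field_simp
  ring

lemma gam_110 (x y : Fin 2 → ℝ) (hD : x 0 * y 1 + x 1 * y 0 ≠ 0) :
    Gam webG 1 1 0 x y = (x 0 * x 1 + y 0 * y 1) / (2 * (x 0 * y 1 + x 1 * y 0)^2) := by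
  unfold Gam
  rw [fbar_inv x y hD, ftil_inv x y hD]
  simp only [Fin.sum_univ_two, d2_000, d2_001, d2_010, d2_011, d2_100, d2_101, d2_110, d2_111,
    Matrix.smul_apply, Matrix.of_apply, Matrix.cons_val', Matrix.cons_val_zero, Matrix.cons_val_one,
    Matrix.head_cons, Matrix.head_fin_const, Matrix.empty_val', Matrix.cons_val_fin_one,
    smul_eq_mul]
  field_simp
  ring

/-- For the web `webG` on the domain `Δ = x¹y² + x²y¹ ≠ 0`, with
`ρ = x¹x² + y¹y²`, the connection coefficients satisfy
`Γ¹₁₁ = −Γ²₁₁ = f²/(2Δ²)`, `Γ¹₂₂ = −Γ²₂₂ = −f¹/(2Δ²)`,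
`Γ¹₁₂ = −Γ¹₂₁ = −Γ²₁₂ = Γ²₂₁ = ρ/(2Δ²)`, and consequently the two components
of the torsion covector are equal: `a₁ = a₂ = −ρ/Δ²`. -/
theorem webG_connection_and_torsion (x y : Fin 2 → ℝ)
    (Δ ρ : ℝ) (hΔ : Δ = x 0 * y 1 + x 1 * y 0) (hρ : ρ = x 0 * x 1 + y 0 * y 1)
    (h : Δ ≠ 0) :
    Gam webG 0 0 0 x y = (x 0 - y 0) * (x 1 + y 1) / (2 * Δ^2) ∧
    Gam webG 1 0 0 x y = -((x 0 - y 0) * (x 1 + y 1) / (2 * Δ^2)) ∧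
    Gam webG 0 1 1 x y = -((x 0 + y 0) * (x 1 - y 1) / (2 * Δ^2)) ∧
    Gam webG 1 1 1 x y = (x 0 + y 0) * (x 1 - y 1) / (2 * Δ^2) ∧
    Gam webG 0 0 1 x y = ρ / (2 * Δ^2) ∧
    Gam webG 0 1 0 x y = -(ρ / (2 * Δ^2)) ∧
    Gam webG 1 0 1 x y = -(ρ / (2 * Δ^2)) ∧
    Gam webG 1 1 0 x y = ρ / (2 * Δ^2) ∧
    aCov webG 0 x y = -ρ / Δ^2 ∧
    aCov webG 1 x y = -ρ / Δ^2 := by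
  subst hΔ hρ
  refine ⟨gam_000 x y h, gam_100 x y h, gam_011 x y h, gam_111 x y h,
    gam_001 x y h, gam_010 x y h, gam_101 x y h, gam_110 x y h, ?_, ?_⟩ <;>
  · unfold aCov
    rw [Fin.sum_univ_two]
    simp only [gam_000 x y h, gam_101 x y h, gam_110 x y h, gam_010 x y h, gam_001 x y h,
      gam_111 x y h]
    field_simp
    ring

end
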